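/- (LPS first Green identity, eq. (2.11).) For every u, z ∈ L²(Ω̄; ℝ²) that are essentially bounded on Ω̄, the identity ∫_{Ω̄} (−ℒ^{LPS}u)(x) · z(x) dx = a^{LPS}(u, z) holds, where ℒ^{LPS} is the LPS operator with integration domain D = Ω̄. In particular, for z vanishing a.e. on Ω_I, ∫_Ω (−ℒ^{LPS}u) · z dx = a^{LPS}(u, z), so strong solutions of the volume-constrained LPS problem are weak solutions. -/

import Mathlib

open MeasureTheory
open scoped RealInnerProductSpace

abbrev E2 := EuclideanSpace ℝ (Fin 2)

set_option maxHeartbeats 2000000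

/-- LPS first Green identity (eq. (2.11)): for essentially bounded `u, z ∈ L²(Ω̄; ℝ²)`,
`∫_{Ω̄} (−ℒ^{LPS}u)·z = a^{LPS}(u,z)`; in particular, for `z` vanishing a.e. on `Ω_I`,
`∫_Ω (−ℒ^{LPS}u)·z = a^{LPS}(u,z)`. -/
theorem lps_green_identity
    (δ : ℝ) (hδ : 0 < δ) (lam mu : ℝ)
    (Ω ΩI : Set (EuclideanSpace ℝ (Fin 2)))
    (hΩ_open : IsOpen Ω) (hΩ_ne : Ω.Nonempty) (hΩ_bdd : Bornology.IsBounded Ω)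
    (hΩI_sub : ΩI ⊆ Ωᶜ) (hΩI_meas : MeasurableSet ΩI)
    (hfin : volume (Ω ∪ ΩI) < ⊤)
    (γ : ℝ → ℝ) (hγ_meas : Measurable γ) (hγ_nonneg : ∀ r, 0 ≤ γ r)
    (hγ_supp : ∀ r, δ ≤ r → γ r = 0)
    (hγ_int : Integrable (fun h : EuclideanSpace ℝ (Fin 2) => γ ‖h‖))
    (m : ℝ) (hm : 0 < m)
    (hm_def : (∫ h : EuclideanSpace ℝ (Fin 2), γ ‖h‖ * ‖h‖ ^ 2) = m)
    (u z : EuclideanSpace ℝ (Fin 2) → EuclideanSpace ℝ (Fin 2))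
    (hu2 : MemLp u 2 (volume.restrict (Ω ∪ ΩI)))
    (hu_inf : MemLp u ⊤ (volume.restrict (Ω ∪ ΩI)))
    (hz2 : MemLp z 2 (volume.restrict (Ω ∪ ΩI)))
    (hz_inf : MemLp z ⊤ (volume.restrict (Ω ∪ ΩI)))
    (θ : EuclideanSpace ℝ (Fin 2) → ℝ)
    (hθ : ∀ p, θ p = (2 / m) * ∫ y in Ω ∪ ΩI, γ ‖y - p‖ * ⟪y - p, u y - u p⟫)
    (Lu : EuclideanSpace ℝ (Fin 2) → EuclideanSpace ℝ (Fin 2))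
    (hLu : ∀ p, Lu p =
      ((2 * (lam - mu)) / m) • (∫ y in Ω ∪ ΩI, (γ ‖y - p‖ * (θ p + θ y)) • (y - p)) +
        ((16 * mu) / m) •
          (∫ y in Ω ∪ ΩI, (γ ‖y - p‖ * (⟪y - p, u y - u p⟫ / ‖y - p‖ ^ 2)) • (y - p)))
    (Du Dz : EuclideanSpace ℝ (Fin 2) → ℝ)
    (hDu : ∀ p, Du p = ∫ y in Ω ∪ ΩI, γ ‖y - p‖ * ⟪y - p, u y - u p⟫)
    (hDz : ∀ p, Dz p = ∫ y in Ω ∪ ΩI, γ ‖y - p‖ * ⟪y - p, z y - z p⟫) :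
    ((∫ x in Ω ∪ ΩI, ⟪-(Lu x), z x⟫) =
        (2 * 2 * (lam - mu) / m ^ 2) * (∫ x in Ω ∪ ΩI, Du x * Dz x) +
          (16 * mu / (2 * m)) * ∫ x in Ω ∪ ΩI, ∫ y in Ω ∪ ΩI,
            γ ‖y - x‖ * (⟪u y - u x, y - x⟫ * ⟪z y - z x, y - x⟫) / ‖y - x‖ ^ 2) ∧
      ((∀ᵐ x ∂(volume.restrict ΩI), z x = 0) →
        (∫ x in Ω, ⟪-(Lu x), z x⟫) =
          (2 * 2 * (lam - mu) / m ^ 2) * (∫ x in Ω ∪ ΩI, Du x * Dz x) +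
            (16 * mu / (2 * m)) * ∫ x in Ω ∪ ΩI, ∫ y in Ω ∪ ΩI,
              γ ‖y - x‖ * (⟪u y - u x, y - x⟫ * ⟪z y - z x, y - x⟫) / ‖y - x‖ ^ 2) := by
  classical
  set ν : Measure E2 := volume.restrict (Ω ∪ ΩI) with hνdef
  haveI : IsFiniteMeasure ν := ⟨by
    rw [hνdef, Measure.restrict_apply_univ]; exact hfin⟩
  -- essential sup bounds
  have essB : ∀ f : E2 → E2, MemLp f ⊤ ν →
      ∀ᵐ x ∂ν, ‖f x‖ ≤ (eLpNormEssSup f ν).toReal := by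
    intro f hf
    filter_upwards [ae_le_eLpNormEssSup (f := f) (μ := ν)] with x hx
    have hne : eLpNormEssSup f ν ≠ ⊤ := by
      have := hf.2; rwa [eLpNorm_exponent_top, lt_top_iff_ne_top] at this
    simpa using ENNReal.toReal_mono hne hx
  -- bounded strongly measurable representatives
  have mkRep : ∀ f : E2 → E2, MemLp f ⊤ ν →
      ∃ g : E2 → E2, StronglyMeasurable g ∧ f =ᵐ[ν] g ∧
        ∀ x, ‖g x‖ ≤ (eLpNormEssSup f ν).toReal := by
    intro f hf
    have hM0 : (0:ℝ) ≤ (eLpNormEssSup f ν).toReal := ENNReal.toReal_nonneg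
    have hsm := hf.1.stronglyMeasurable_mk
    refine ⟨fun x => if ‖hf.1.mk f x‖ ≤ (eLpNormEssSup f ν).toReal then hf.1.mk f x else 0,
      ?_, ?_, ?_⟩
    · exact StronglyMeasurable.ite (measurableSet_le hsm.measurable.norm measurable_const)
        hsm stronglyMeasurable_const
    · filter_upwards [hf.1.ae_eq_mk, essB f hf] with x h1 h2
      rw [← h1]
      simp only [← h1, h2, if_true]
    · intro x
      by_cases h : ‖hf.1.mk f x‖ ≤ (eLpNormEssSup f ν).toReal
      · simpa [h] using h
      · simp [h, hM0]
  obtain ⟨U, hUsm, huU, hUbd⟩ := mkRep u hu_inf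
  obtain ⟨Z, hZsm, hzZ, hZbd⟩ := mkRep z hz_inf
  set Mu : ℝ := (eLpNormEssSup u ν).toReal with hMudef
  set Mz : ℝ := (eLpNormEssSup z ν).toReal with hMzdef
  have hMu0 : (0:ℝ) ≤ Mu := ENNReal.toReal_nonneg
  have hMz0 : (0:ℝ) ≤ Mz := ENNReal.toReal_nonneg
  -- kernel facts
  set Cγ : ℝ := ∫ h : E2, γ ‖h‖ with hCγdef
  have hCγ0 : 0 ≤ Cγ := integral_nonneg fun h => hγ_nonneg _
  have hγδ : ∀ h : E2, γ ‖h‖ * ‖h‖ ≤ δ * γ ‖h‖ := by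
    intro h
    rcases le_or_gt δ ‖h‖ with h1 | h1
    · rw [hγ_supp _ h1]; simp
    · have h2 := hγ_nonneg ‖h‖
      nlinarith [norm_nonneg h]
  have hkx_int : ∀ x : E2, Integrable (fun y => γ ‖y - x‖) ν :=
    fun x => (hγ_int.comp_sub_right x).integrableOn
  have hkx_le : ∀ x : E2, (∫ y, γ ‖y - x‖ ∂ν) ≤ Cγ := by
    intro x
    have h1 : (∫ y, γ ‖y - x‖ ∂ν) ≤ ∫ y, γ ‖y - x‖ :=
      setIntegral_le_integral (hγ_int.comp_sub_right x) (ae_of_all _ fun y => hγ_nonneg _)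
    rwa [integral_sub_right_eq_self (μ := volume) (fun h => γ ‖h‖) x] at h1
  have mkk : Measurable fun p : E2 × E2 => γ ‖p.2 - p.1‖ :=
    hγ_meas.comp (measurable_snd.sub measurable_fst).norm
  have hkk_int : Integrable (fun p : E2 × E2 => γ ‖p.2 - p.1‖) (ν.prod ν) := by
    refine (integrable_prod_iff mkk.aestronglyMeasurable).2 ⟨ae_of_all _ fun x => hkx_int x, ?_⟩
    refine Integrable.mono' (integrable_const Cγ)
      (mkk.norm.stronglyMeasurable.integral_prod_right').aestronglyMeasurable
      (ae_of_all _ fun x => ?_)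
    have h1 : (∫ y, ‖γ ‖y - x‖‖ ∂ν) = ∫ y, γ ‖y - x‖ ∂ν :=
      integral_congr_ae (ae_of_all _ fun y => by
        simp [Real.norm_eq_abs, abs_of_nonneg (hγ_nonneg _)])
    rw [Real.norm_eq_abs, h1, abs_of_nonneg (integral_nonneg fun y => hγ_nonneg _)]
    exact hkx_le x
  -- generic integrability from bounds
  have bd_intR : ∀ (F : E2 × E2 → ℝ) (C : ℝ), AEStronglyMeasurable F (ν.prod ν) →
      (∀ p : E2 × E2, |F p| ≤ C * γ ‖p.2 - p.1‖) → Integrable F (ν.prod ν) := by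
    intro F C hFm hFb
    exact (hkk_int.const_mul C).mono' hFm (ae_of_all _ fun p => by
      rw [Real.norm_eq_abs]; exact hFb p)
  have bd_intE : ∀ (F : E2 × E2 → E2) (C : ℝ), AEStronglyMeasurable F (ν.prod ν) →
      (∀ p : E2 × E2, ‖F p‖ ≤ C * γ ‖p.2 - p.1‖) → Integrable F (ν.prod ν) := by
    intro F C hFm hFb
    exact (hkk_int.const_mul C).mono' hFm (ae_of_all _ fun p => hFb p)
  -- measurable pieces
  have mU : Measurable U := hUsm.measurable
  have mZ : Measurable Z := hZsm.measurable
  have msub : Measurable fun p : E2 × E2 => p.2 - p.1 := measurable_snd.sub measurable_fst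
  -- primed dilatation etc.
  set DU : E2 → ℝ := fun x => ∫ y, γ ‖y - x‖ * ⟪y - x, U y - U x⟫ ∂ν with hDUdef
  set DZ : E2 → ℝ := fun x => ∫ y, γ ‖y - x‖ * ⟪y - x, Z y - Z x⟫ ∂ν with hDZdef
  set Θ : E2 → ℝ := fun x => (2 / m) * DU x with hΘdef
  have mFu : Measurable fun p : E2 × E2 => γ ‖p.2 - p.1‖ * ⟪p.2 - p.1, U p.2 - U p.1⟫ :=
    mkk.mul (msub.inner ((mU.comp measurable_snd).sub (mU.comp measurable_fst)))
  have mFz : Measurable fun p : E2 × E2 => γ ‖p.2 - p.1‖ * ⟪p.2 - p.1, Z p.2 - Z p.1⟫ :=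
    mkk.mul (msub.inner ((mZ.comp measurable_snd).sub (mZ.comp measurable_fst)))
  have mDU : StronglyMeasurable DU := mFu.stronglyMeasurable.integral_prod_right'
  have mDZ : StronglyMeasurable DZ := mFz.stronglyMeasurable.integral_prod_right'
  have mΘ : Measurable Θ := (measurable_const.mul mDU.measurable)
  -- bound on Θ
  have hDUbd : ∀ x : E2, |DU x| ≤ (2 * Mu * δ) * Cγ := by
    intro x
    have h2 : ∀ y : E2, ‖γ ‖y - x‖ * ⟪y - x, U y - U x⟫‖ ≤ (2 * Mu * δ) * γ ‖y - x‖ := by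
      intro y
      rw [Real.norm_eq_abs, abs_mul, abs_of_nonneg (hγ_nonneg _)]
      have e1 := abs_real_inner_le_norm (y - x) (U y - U x)
      have e2 : ‖U y - U x‖ ≤ 2 * Mu :=
        (norm_sub_le _ _).trans (by have := hUbd y; have := hUbd x; linarith)
      have e3 := hγδ (y - x)
      have e4 := hγ_nonneg ‖y - x‖
      have e5 := norm_nonneg (y - x)
      have e6 := norm_nonneg (U y - U x)
      nlinarith [mul_le_mul_of_nonneg_left e1 e4,
        mul_le_mul_of_nonneg_left e2 (mul_nonneg e4 e5),
        mul_le_mul_of_nonneg_right e3 (by positivity : (0:ℝ) ≤ 2 * Mu)]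
    have h3 := norm_integral_le_of_norm_le ((hkx_int x).const_mul (2 * Mu * δ))
      (ae_of_all _ h2)
    rw [Real.norm_eq_abs] at h3
    calc |DU x| ≤ ∫ y, (2 * Mu * δ) * γ ‖y - x‖ ∂ν := h3
      _ = (2 * Mu * δ) * ∫ y, γ ‖y - x‖ ∂ν := integral_const_mul _ _
      _ ≤ (2 * Mu * δ) * Cγ := by
          apply mul_le_mul_of_nonneg_left (hkx_le x) (by positivity)
  set CΘ : ℝ := (2 / m) * ((2 * Mu * δ) * Cγ) with hCΘdef
  have hCΘ0 : 0 ≤ CΘ := by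
    apply mul_nonneg (by positivity)
    exact mul_nonneg (by positivity) hCγ0
  have hΘbd : ∀ x : E2, |Θ x| ≤ CΘ := by
    intro x
    rw [hΘdef]
    simp only []
    rw [abs_mul, abs_of_nonneg (by positivity : (0:ℝ) ≤ 2 / m)]
    exact mul_le_mul_of_nonneg_left (hDUbd x) (by positivity)
  clear_value DU DZ Θ
  -- inner product bounds
  have ipb : ∀ (h w : E2) (Cw : ℝ), ‖w‖ ≤ Cw → |(⟪h, w⟫ : ℝ)| ≤ Cw * ‖h‖ := by
    intro h w Cw hw
    calc |(⟪h, w⟫ : ℝ)| ≤ ‖h‖ * ‖w‖ := abs_real_inner_le_norm _ _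
      _ ≤ ‖h‖ * Cw := mul_le_mul_of_nonneg_left hw (norm_nonneg _)
      _ = Cw * ‖h‖ := mul_comm _ _
  -- the product-space integrands
  set F1 : E2 × E2 → ℝ :=
    fun p => γ ‖p.2 - p.1‖ * (Θ p.1 + Θ p.2) * ⟪p.2 - p.1, Z p.1⟫ with hF1def
  set F1b : E2 × E2 → ℝ :=
    fun p => γ ‖p.2 - p.1‖ * (Θ p.1 + Θ p.2) * ⟪p.2 - p.1, Z p.2⟫ with hF1bdef
  set F2 : E2 × E2 → ℝ :=
    fun p => γ ‖p.2 - p.1‖ * (⟪p.2 - p.1, U p.2 - U p.1⟫ / ‖p.2 - p.1‖ ^ 2) *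
      ⟪p.2 - p.1, Z p.1⟫ with hF2def
  set F2b : E2 × E2 → ℝ :=
    fun p => γ ‖p.2 - p.1‖ * (⟪p.2 - p.1, U p.2 - U p.1⟫ / ‖p.2 - p.1‖ ^ 2) *
      ⟪p.2 - p.1, Z p.2⟫ with hF2bdef
  set G1 : E2 × E2 → ℝ :=
    fun p => Θ p.1 * (γ ‖p.2 - p.1‖ * ⟪p.2 - p.1, Z p.2 - Z p.1⟫) with hG1def
  set G2 : E2 × E2 → ℝ :=
    fun p => Θ p.2 * (γ ‖p.2 - p.1‖ * ⟪p.2 - p.1, Z p.2 - Z p.1⟫) with hG2def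
  set W : E2 × E2 → ℝ :=
    fun p => γ ‖p.2 - p.1‖ * (⟪U p.2 - U p.1, p.2 - p.1⟫ * ⟪Z p.2 - Z p.1, p.2 - p.1⟫) /
      ‖p.2 - p.1‖ ^ 2 with hWdef
  set FA : E2 × E2 → E2 :=
    fun p => (γ ‖p.2 - p.1‖ * (Θ p.1 + Θ p.2)) • (p.2 - p.1) with hFAdef
  set FB : E2 × E2 → E2 :=
    fun p => (γ ‖p.2 - p.1‖ * (⟪p.2 - p.1, U p.2 - U p.1⟫ / ‖p.2 - p.1‖ ^ 2)) • (p.2 - p.1)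
      with hFBdef
  -- measurability of the integrands
  have mΘ1 : Measurable fun p : E2 × E2 => Θ p.1 := mΘ.comp measurable_fst
  have mΘ2 : Measurable fun p : E2 × E2 => Θ p.2 := mΘ.comp measurable_snd
  have mZ1 : Measurable fun p : E2 × E2 => Z p.1 := mZ.comp measurable_fst
  have mZ2 : Measurable fun p : E2 × E2 => Z p.2 := mZ.comp measurable_snd
  have mipU : Measurable fun p : E2 × E2 => (⟪p.2 - p.1, U p.2 - U p.1⟫ : ℝ) :=
    msub.inner ((mU.comp measurable_snd).sub (mU.comp measurable_fst))
  have mipZd : Measurable fun p : E2 × E2 => (⟪p.2 - p.1, Z p.2 - Z p.1⟫ : ℝ) :=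
    msub.inner (mZ2.sub mZ1)
  have mF1 : Measurable F1 := (mkk.mul (mΘ1.add mΘ2)).mul (msub.inner mZ1)
  have mF1b : Measurable F1b := (mkk.mul (mΘ1.add mΘ2)).mul (msub.inner mZ2)
  have mF2 : Measurable F2 :=
    (mkk.mul (mipU.div (msub.norm.pow measurable_const))).mul (msub.inner mZ1)
  have mF2b : Measurable F2b :=
    (mkk.mul (mipU.div (msub.norm.pow measurable_const))).mul (msub.inner mZ2)
  have mG1 : Measurable G1 := mΘ1.mul (mkk.mul mipZd)
  have mG2 : Measurable G2 := mΘ2.mul (mkk.mul mipZd)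
  have mW : Measurable W :=
    (mkk.mul ((((mU.comp measurable_snd).sub (mU.comp measurable_fst)).inner msub).mul
      ((mZ2.sub mZ1).inner msub))).div (msub.norm.pow measurable_const)
  have mFA : Measurable FA := (mkk.mul (mΘ1.add mΘ2)).smul msub
  have mFB : Measurable FB := (mkk.mul (mipU.div (msub.norm.pow measurable_const))).smul msub
  clear_value F1 F1b F2 F2b G1 G2 W FA FB
  -- pointwise bounds
  have bF1 : ∀ p : E2 × E2, |F1 p| ≤ (2 * CΘ * (Mz * δ)) * γ ‖p.2 - p.1‖ := by
    intro p
    simp only [hF1def]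
    rw [abs_mul, abs_mul, abs_of_nonneg (hγ_nonneg _)]
    have e1 : |Θ p.1 + Θ p.2| ≤ 2 * CΘ := by
      have := hΘbd p.1; have := hΘbd p.2
      calc |Θ p.1 + Θ p.2| ≤ |Θ p.1| + |Θ p.2| := abs_add_le _ _
        _ ≤ 2 * CΘ := by linarith
    have e2 : |(⟪p.2 - p.1, Z p.1⟫ : ℝ)| ≤ Mz * ‖p.2 - p.1‖ := ipb _ _ _ (hZbd _)
    have e3 := hγδ (p.2 - p.1)
    have e4 := hγ_nonneg ‖p.2 - p.1‖
    have e5 := norm_nonneg (p.2 - p.1)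
    nlinarith [mul_le_mul (mul_le_mul_of_nonneg_left e1 e4) e2 (abs_nonneg _)
        (mul_nonneg e4 (by linarith)),
      mul_le_mul_of_nonneg_right e3 (mul_nonneg (by linarith : (0:ℝ) ≤ 2 * CΘ) hMz0)]
  have bF1b : ∀ p : E2 × E2, |F1b p| ≤ (2 * CΘ * (Mz * δ)) * γ ‖p.2 - p.1‖ := by
    intro p
    simp only [hF1bdef]
    rw [abs_mul, abs_mul, abs_of_nonneg (hγ_nonneg _)]
    have e1 : |Θ p.1 + Θ p.2| ≤ 2 * CΘ := by
      have := hΘbd p.1; have := hΘbd p.2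
      calc |Θ p.1 + Θ p.2| ≤ |Θ p.1| + |Θ p.2| := abs_add_le _ _
        _ ≤ 2 * CΘ := by linarith
    have e2 : |(⟪p.2 - p.1, Z p.2⟫ : ℝ)| ≤ Mz * ‖p.2 - p.1‖ := ipb _ _ _ (hZbd _)
    have e3 := hγδ (p.2 - p.1)
    have e4 := hγ_nonneg ‖p.2 - p.1‖
    have e5 := norm_nonneg (p.2 - p.1)
    nlinarith [mul_le_mul (mul_le_mul_of_nonneg_left e1 e4) e2 (abs_nonneg _)
        (mul_nonneg e4 (by linarith)),
      mul_le_mul_of_nonneg_right e3 (mul_nonneg (by linarith : (0:ℝ) ≤ 2 * CΘ) hMz0)]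
  -- bound for the singular quotient terms
  have bquot : ∀ (p : E2 × E2) (v : E2) (Cv : ℝ), 0 ≤ Cv → ‖v‖ ≤ Cv →
      |γ ‖p.2 - p.1‖ * (⟪p.2 - p.1, U p.2 - U p.1⟫ / ‖p.2 - p.1‖ ^ 2) * ⟪p.2 - p.1, v⟫|
        ≤ (2 * Mu * Cv) * γ ‖p.2 - p.1‖ := by
    intro p v Cv hCv0 hCv
    rcases eq_or_ne (p.2 - p.1) 0 with hs | hs
    · rw [hs]
      simp only [inner_zero_left, mul_zero, abs_zero]
      exact mul_nonneg (mul_nonneg (mul_nonneg (by norm_num) hMu0) hCv0) (hγ_nonneg _)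
    · have hsp : 0 < ‖p.2 - p.1‖ := norm_pos_iff.2 hs
      rw [abs_mul, abs_mul, abs_of_nonneg (hγ_nonneg _)]
      have e1 : |(⟪p.2 - p.1, U p.2 - U p.1⟫ : ℝ)| ≤ (2 * Mu) * ‖p.2 - p.1‖ := by
        refine ipb _ _ _ ((norm_sub_le _ _).trans ?_)
        have := hUbd p.2; have := hUbd p.1; linarith
      have e2 : |(⟪p.2 - p.1, v⟫ : ℝ)| ≤ Cv * ‖p.2 - p.1‖ := ipb _ _ _ hCv
      have e3 : |(⟪p.2 - p.1, U p.2 - U p.1⟫ : ℝ) / ‖p.2 - p.1‖ ^ 2| ≤ 2 * Mu / ‖p.2 - p.1‖ := by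
        rw [abs_div, abs_of_nonneg (sq_nonneg ‖p.2 - p.1‖)]
        rw [div_le_div_iff₀ (pow_pos hsp 2) hsp]
        calc |(⟪p.2 - p.1, U p.2 - U p.1⟫ : ℝ)| * ‖p.2 - p.1‖
            ≤ ((2 * Mu) * ‖p.2 - p.1‖) * ‖p.2 - p.1‖ :=
              mul_le_mul_of_nonneg_right e1 (norm_nonneg _)
          _ = 2 * Mu * ‖p.2 - p.1‖ ^ 2 := by ring
      have e4 : γ ‖p.2 - p.1‖ * |(⟪p.2 - p.1, U p.2 - U p.1⟫ : ℝ) / ‖p.2 - p.1‖ ^ 2| *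
          |(⟪p.2 - p.1, v⟫ : ℝ)| ≤ γ ‖p.2 - p.1‖ * (2 * Mu / ‖p.2 - p.1‖) * (Cv * ‖p.2 - p.1‖) := by
        refine mul_le_mul (mul_le_mul_of_nonneg_left e3 (hγ_nonneg _)) e2 (abs_nonneg _) ?_
        exact mul_nonneg (hγ_nonneg _) (div_nonneg (by linarith) hsp.le)
      refine e4.trans (le_of_eq ?_)
      field_simp
  have bF2 : ∀ p : E2 × E2, |F2 p| ≤ (2 * Mu * Mz) * γ ‖p.2 - p.1‖ := by
    intro p; simpa only [hF2def] using bquot p (Z p.1) Mz hMz0 (hZbd _)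
  have bF2b : ∀ p : E2 × E2, |F2b p| ≤ (2 * Mu * Mz) * γ ‖p.2 - p.1‖ := by
    intro p; simpa only [hF2bdef] using bquot p (Z p.2) Mz hMz0 (hZbd _)
  have bZd : ∀ p : E2 × E2, |(⟪p.2 - p.1, Z p.2 - Z p.1⟫ : ℝ)| ≤ (2 * Mz) * ‖p.2 - p.1‖ := by
    intro p
    refine ipb _ _ _ ((norm_sub_le _ _).trans ?_)
    have := hZbd p.2; have := hZbd p.1; linarith
  have bG1 : ∀ p : E2 × E2, |G1 p| ≤ (CΘ * (2 * Mz) * δ) * γ ‖p.2 - p.1‖ := by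
    intro p
    simp only [hG1def]
    rw [abs_mul, abs_mul, abs_of_nonneg (hγ_nonneg _)]
    have e1 := hΘbd p.1
    have e2 := bZd p
    have e3 := hγδ (p.2 - p.1)
    have e4 := hγ_nonneg ‖p.2 - p.1‖
    have e5 := norm_nonneg (p.2 - p.1)
    nlinarith [mul_le_mul e1 (mul_le_mul_of_nonneg_left e2 e4) (mul_nonneg e4 (abs_nonneg _)) hCΘ0,
      mul_le_mul_of_nonneg_right e3 (mul_nonneg hCΘ0 (by linarith : (0:ℝ) ≤ 2 * Mz))]
  have bG2 : ∀ p : E2 × E2, |G2 p| ≤ (CΘ * (2 * Mz) * δ) * γ ‖p.2 - p.1‖ := by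
    intro p
    simp only [hG2def]
    rw [abs_mul, abs_mul, abs_of_nonneg (hγ_nonneg _)]
    have e1 := hΘbd p.2
    have e2 := bZd p
    have e3 := hγδ (p.2 - p.1)
    have e4 := hγ_nonneg ‖p.2 - p.1‖
    have e5 := norm_nonneg (p.2 - p.1)
    nlinarith [mul_le_mul e1 (mul_le_mul_of_nonneg_left e2 e4) (mul_nonneg e4 (abs_nonneg _)) hCΘ0,
      mul_le_mul_of_nonneg_right e3 (mul_nonneg hCΘ0 (by linarith : (0:ℝ) ≤ 2 * Mz))]
  have bW : ∀ p : E2 × E2, |W p| ≤ (2 * Mu * (2 * Mz)) * γ ‖p.2 - p.1‖ := by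
    intro p
    simp only [hWdef]
    rcases eq_or_ne (p.2 - p.1) 0 with hs | hs
    · rw [hs]
      simp only [inner_zero_right, mul_zero, zero_mul, zero_div, abs_zero]
      exact mul_nonneg (mul_nonneg (by linarith) (by linarith)) (hγ_nonneg _)
    · have hsp : 0 < ‖p.2 - p.1‖ := norm_pos_iff.2 hs
      have e1 : |(⟪U p.2 - U p.1, p.2 - p.1⟫ : ℝ)| ≤ (2 * Mu) * ‖p.2 - p.1‖ := by
        rw [real_inner_comm]
        refine ipb _ _ _ ((norm_sub_le _ _).trans ?_)
        have := hUbd p.2; have := hUbd p.1; linarith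
      have e2 : |(⟪Z p.2 - Z p.1, p.2 - p.1⟫ : ℝ)| ≤ (2 * Mz) * ‖p.2 - p.1‖ := by
        rw [real_inner_comm]; exact bZd p
      rw [abs_div, abs_mul, abs_mul, abs_of_nonneg (hγ_nonneg _),
        abs_of_nonneg (sq_nonneg ‖p.2 - p.1‖),
        div_le_iff₀ (pow_pos hsp 2)]
      have e3 : |(⟪U p.2 - U p.1, p.2 - p.1⟫ : ℝ)| * |(⟪Z p.2 - Z p.1, p.2 - p.1⟫ : ℝ)| ≤
          (2 * Mu) * (2 * Mz) * ‖p.2 - p.1‖ ^ 2 := by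
        nlinarith [mul_le_mul e1 e2 (abs_nonneg _) (mul_nonneg (by linarith) (norm_nonneg _))]
      nlinarith [mul_le_mul_of_nonneg_left e3 (hγ_nonneg ‖p.2 - p.1‖)]
  have bFA : ∀ p : E2 × E2, ‖FA p‖ ≤ (2 * CΘ * δ) * γ ‖p.2 - p.1‖ := by
    intro p
    simp only [hFAdef]
    rw [norm_smul, Real.norm_eq_abs, abs_mul, abs_of_nonneg (hγ_nonneg _)]
    have e1 : |Θ p.1 + Θ p.2| ≤ 2 * CΘ := by
      have := hΘbd p.1; have := hΘbd p.2
      calc |Θ p.1 + Θ p.2| ≤ |Θ p.1| + |Θ p.2| := abs_add_le _ _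
        _ ≤ 2 * CΘ := by linarith
    have e3 := hγδ (p.2 - p.1)
    have e4 := hγ_nonneg ‖p.2 - p.1‖
    have e5 := norm_nonneg (p.2 - p.1)
    nlinarith [mul_le_mul_of_nonneg_right (mul_le_mul_of_nonneg_left e1 e4) e5,
      mul_le_mul_of_nonneg_right e3 (by linarith : (0:ℝ) ≤ 2 * CΘ)]
  have bFB : ∀ p : E2 × E2, ‖FB p‖ ≤ (2 * Mu) * γ ‖p.2 - p.1‖ := by
    intro p
    simp only [hFBdef]
    rcases eq_or_ne (p.2 - p.1) 0 with hs | hs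
    · rw [hs]
      simp only [smul_zero, norm_zero]
      exact mul_nonneg (by linarith) (hγ_nonneg _)
    · have hsp : 0 < ‖p.2 - p.1‖ := norm_pos_iff.2 hs
      rw [norm_smul, Real.norm_eq_abs, abs_mul, abs_of_nonneg (hγ_nonneg _)]
      have e1 : |(⟪p.2 - p.1, U p.2 - U p.1⟫ : ℝ)| ≤ (2 * Mu) * ‖p.2 - p.1‖ := by
        refine ipb _ _ _ ((norm_sub_le _ _).trans ?_)
        have := hUbd p.2; have := hUbd p.1; linarith
      have e3 : |(⟪p.2 - p.1, U p.2 - U p.1⟫ : ℝ) / ‖p.2 - p.1‖ ^ 2| ≤ 2 * Mu / ‖p.2 - p.1‖ := by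
        rw [abs_div, abs_of_nonneg (by positivity : (0:ℝ) ≤ ‖p.2 - p.1‖ ^ 2)]
        rw [div_le_div_iff₀ (pow_pos hsp 2) hsp]
        nlinarith [mul_le_mul_of_nonneg_right e1 (norm_nonneg (p.2 - p.1))]
      have e4 : γ ‖p.2 - p.1‖ * |(⟪p.2 - p.1, U p.2 - U p.1⟫ : ℝ) / ‖p.2 - p.1‖ ^ 2| *
          ‖p.2 - p.1‖ ≤ γ ‖p.2 - p.1‖ * (2 * Mu / ‖p.2 - p.1‖) * ‖p.2 - p.1‖ :=
        mul_le_mul_of_nonneg_right (mul_le_mul_of_nonneg_left e3 (hγ_nonneg _)) (norm_nonneg _)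
      refine e4.trans (le_of_eq ?_)
      field_simp
  -- integrability on the product
  have I1 : Integrable F1 (ν.prod ν) := bd_intR F1 _ mF1.aestronglyMeasurable bF1
  have I1b : Integrable F1b (ν.prod ν) := bd_intR F1b _ mF1b.aestronglyMeasurable bF1b
  have I2 : Integrable F2 (ν.prod ν) := bd_intR F2 _ mF2.aestronglyMeasurable bF2
  have I2b : Integrable F2b (ν.prod ν) := bd_intR F2b _ mF2b.aestronglyMeasurable bF2b
  have IG1 : Integrable G1 (ν.prod ν) := bd_intR G1 _ mG1.aestronglyMeasurable bG1
  have IG2 : Integrable G2 (ν.prod ν) := bd_intR G2 _ mG2.aestronglyMeasurable bG2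
  have IW : Integrable W (ν.prod ν) := bd_intR W _ mW.aestronglyMeasurable bW
  have IA : Integrable FA (ν.prod ν) := bd_intE FA _ mFA.aestronglyMeasurable bFA
  have IB : Integrable FB (ν.prod ν) := bd_intE FB _ mFB.aestronglyMeasurable bFB
  -- a.e. identifications with the bounded representatives
  have hΘae : θ =ᵐ[ν] Θ := by
    filter_upwards [huU] with x hx
    rw [hθ x]
    simp only [hΘdef, hDUdef]
    congr 1
    refine integral_congr_ae ?_
    filter_upwards [huU] with y hy
    rw [hx, hy]
  have hDuae : Du =ᵐ[ν] DU := by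
    filter_upwards [huU] with x hx
    rw [hDu x]
    simp only [hDUdef]
    refine integral_congr_ae ?_
    filter_upwards [huU] with y hy
    rw [hx, hy]
  have hDzae : Dz =ᵐ[ν] DZ := by
    filter_upwards [hzZ] with x hx
    rw [hDz x]
    simp only [hDZdef]
    refine integral_congr_ae ?_
    filter_upwards [hzZ] with y hy
    rw [hx, hy]
  have hLuae : ∀ᵐ x ∂ν, Lu x = (2 * (lam - mu) / m) • (∫ y, FA (x, y) ∂ν) +
      (16 * mu / m) • (∫ y, FB (x, y) ∂ν) := by
    filter_upwards [hΘae, huU] with x hx1 hx2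
    rw [hLu x]
    congr 1
    · congr 1
      refine integral_congr_ae ?_
      filter_upwards [hΘae] with y hy
      simp only [hFAdef]
      rw [hx1, hy]
    · congr 1
      refine integral_congr_ae ?_
      filter_upwards [huU] with y hy
      simp only [hFBdef]
      rw [hx2, hy]
  -- pointwise (a.e.) expansion of the inner products
  have h1 : (fun x : E2 => (⟪-(Lu x), z x⟫ : ℝ)) =ᵐ[ν] (fun x : E2 =>
      -(2 * (lam - mu) / m * ∫ y, F1 (x, y) ∂ν) - 16 * mu / m * ∫ y, F2 (x, y) ∂ν) := by
    filter_upwards [hLuae, hzZ, IA.prod_right_ae, IB.prod_right_ae] with x hLux hzx hIAx hIBx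
    rw [hLux, hzx, inner_neg_left, inner_add_left, real_inner_smul_left, real_inner_smul_left]
    have eA : (⟪(∫ y, FA (x, y) ∂ν), Z x⟫ : ℝ) = ∫ y, F1 (x, y) ∂ν := by
      rw [real_inner_comm, ← integral_inner hIAx (Z x)]
      refine integral_congr_ae (ae_of_all _ fun y => ?_)
      simp only [hFAdef, hF1def]
      rw [real_inner_smul_right, real_inner_comm (y - x) (Z x)]
    have eB : (⟪(∫ y, FB (x, y) ∂ν), Z x⟫ : ℝ) = ∫ y, F2 (x, y) ∂ν := by
      rw [real_inner_comm, ← integral_inner hIBx (Z x)]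
      refine integral_congr_ae (ae_of_all _ fun y => ?_)
      simp only [hFBdef, hF2def]
      rw [real_inner_smul_right, real_inner_comm (y - x) (Z x)]
    rw [eA, eB]
    ring
  have LHSeq : (∫ x, (⟪-(Lu x), z x⟫ : ℝ) ∂ν) =
      -(2 * (lam - mu) / m * ∫ p, F1 p ∂(ν.prod ν)) -
        16 * mu / m * ∫ p, F2 p ∂(ν.prod ν) := by
    have hIa : Integrable (fun x : E2 => -(2 * (lam - mu) / m * ∫ y, F1 (x, y) ∂ν)) ν :=
      (I1.integral_prod_left.const_mul _).neg
    have hIb : Integrable (fun x : E2 => 16 * mu / m * ∫ y, F2 (x, y) ∂ν) ν :=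
      I2.integral_prod_left.const_mul _
    rw [integral_congr_ae h1, integral_sub hIa hIb,
      integral_neg, integral_const_mul, integral_const_mul,
      ← integral_prod _ I1, ← integral_prod _ I2]
  -- symmetrization
  have swapInt : ∀ F : E2 × E2 → ℝ, (∫ p, F p.swap ∂(ν.prod ν)) = ∫ p, F p ∂(ν.prod ν) :=
    fun F => integral_prod_swap F
  have hT1 : (∫ p, F1 p ∂(ν.prod ν)) = -∫ p, F1b p ∂(ν.prod ν) := by
    have hpt : (fun p : E2 × E2 => F1 p.swap) = fun p => -F1b p := by
      funext p
      simp only [hF1def, hF1bdef, Prod.fst_swap, Prod.snd_swap]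
      rw [norm_sub_rev p.1 p.2, show p.1 - p.2 = -(p.2 - p.1) from (neg_sub _ _).symm,
        inner_neg_left]
      ring
    have h := swapInt F1
    rw [hpt, integral_neg] at h
    linarith
  have hG2G1 : (∫ p, G2 p ∂(ν.prod ν)) = ∫ p, G1 p ∂(ν.prod ν) := by
    have hpt : (fun p : E2 × E2 => G2 p.swap) = fun p => G1 p := by
      funext p
      simp only [hG1def, hG2def, Prod.fst_swap, Prod.snd_swap]
      rw [norm_sub_rev p.1 p.2,
        show p.1 - p.2 = -(p.2 - p.1) from (neg_sub _ _).symm,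
        show Z p.1 - Z p.2 = -(Z p.2 - Z p.1) from (neg_sub _ _).symm,
        inner_neg_neg]
    have h := swapInt G2
    rw [hpt] at h
    exact h.symm
  have hsub1 : (∫ p, (F1 p - F1b p) ∂(ν.prod ν)) =
      -((∫ p, G1 p ∂(ν.prod ν)) + ∫ p, G2 p ∂(ν.prod ν)) := by
    have hpt : ∀ p : E2 × E2, F1 p - F1b p = -(G1 p + G2 p) := by
      intro p
      simp only [hF1def, hF1bdef, hG1def, hG2def]
      rw [inner_sub_right (𝕜 := ℝ) (p.2 - p.1) (Z p.2) (Z p.1)]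
      ring
    rw [integral_congr_ae (ae_of_all _ hpt), integral_neg, integral_add IG1 IG2]
  have hT1G1 : (∫ p, F1 p ∂(ν.prod ν)) = -∫ p, G1 p ∂(ν.prod ν) := by
    have h2 := integral_sub I1 I1b
    linarith [hsub1, hT1, hG2G1, h2]
  have hT2b : (∫ p, F2 p ∂(ν.prod ν)) = -∫ p, F2b p ∂(ν.prod ν) := by
    have hpt : (fun p : E2 × E2 => F2 p.swap) = fun p => -F2b p := by
      funext p
      simp only [hF2def, hF2bdef, Prod.fst_swap, Prod.snd_swap]
      rw [norm_sub_rev p.1 p.2,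
        show p.1 - p.2 = -(p.2 - p.1) from (neg_sub _ _).symm,
        show U p.1 - U p.2 = -(U p.2 - U p.1) from (neg_sub _ _).symm,
        inner_neg_neg, inner_neg_left]
      ring
    have h := swapInt F2
    rw [hpt, integral_neg] at h
    linarith
  have hsub2 : (∫ p, (F2 p - F2b p) ∂(ν.prod ν)) = -∫ p, W p ∂(ν.prod ν) := by
    have hpt : ∀ p : E2 × E2, F2 p - F2b p = -W p := by
      intro p
      simp only [hF2def, hF2bdef, hWdef]
      rw [real_inner_comm (p.2 - p.1) (U p.2 - U p.1),
        real_inner_comm (p.2 - p.1) (Z p.2 - Z p.1),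
        inner_sub_right (𝕜 := ℝ) (p.2 - p.1) (Z p.2) (Z p.1)]
      ring
    rw [integral_congr_ae (ae_of_all _ hpt), integral_neg]
  have hT2W : (∫ p, F2 p ∂(ν.prod ν)) = -(∫ p, W p ∂(ν.prod ν)) / 2 := by
    have h2 := integral_sub I2 I2b
    linarith [hsub2, hT2b, h2]
  -- evaluation of the G1 integral
  have hG1eval : (∫ p, G1 p ∂(ν.prod ν)) = (2 / m) * ∫ x, DU x * DZ x ∂ν := by
    rw [integral_prod _ IG1]
    have h1' : ∀ x : E2, (∫ y, G1 (x, y) ∂ν) = (2 / m) * (DU x * DZ x) := by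
      intro x
      have h2' : (∫ y, G1 (x, y) ∂ν) = Θ x * DZ x := by
        simp only [hG1def]
        rw [integral_const_mul]
        congr 1
        simp only [hDZdef]
      rw [h2']
      simp only [hΘdef]
      ring
    rw [integral_congr_ae (ae_of_all _ h1'), integral_const_mul]
  -- matching the right-hand sides
  have hDuDz : (∫ x, Du x * Dz x ∂ν) = ∫ x, DU x * DZ x ∂ν := by
    refine integral_congr_ae ?_
    filter_upwards [hDuae, hDzae] with x h1' h2'
    rw [h1', h2']
  have hWe : (∫ x, (∫ y, γ ‖y - x‖ * (⟪u y - u x, y - x⟫ * ⟪z y - z x, y - x⟫) / ‖y - x‖ ^ 2 ∂ν) ∂ν)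
      = ∫ p, W p ∂(ν.prod ν) := by
    rw [integral_prod _ IW]
    refine integral_congr_ae ?_
    filter_upwards [huU, hzZ] with x hx1 hx2
    refine integral_congr_ae ?_
    filter_upwards [huU, hzZ] with y hy1 hy2
    simp only [hWdef]
    rw [hx1, hx2, hy1, hy2]
  have main1 : (∫ x, (⟪-(Lu x), z x⟫ : ℝ) ∂ν) =
      2 * 2 * (lam - mu) / m ^ 2 * (∫ x, Du x * Dz x ∂ν) +
        16 * mu / (2 * m) *
          ∫ x, (∫ y, γ ‖y - x‖ * (⟪u y - u x, y - x⟫ * ⟪z y - z x, y - x⟫) / ‖y - x‖ ^ 2 ∂ν) ∂ν := by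
    rw [LHSeq, hT1G1, hT2W, hG1eval, hDuDz, hWe]
    ring
  refine ⟨main1, fun hz0 => ?_⟩
  have hIf : IntegrableOn (fun x => (⟪-(Lu x), z x⟫ : ℝ)) (Ω ∪ ΩI) volume := by
    have hInt2 : Integrable (fun x : E2 =>
        -(2 * (lam - mu) / m * ∫ y, F1 (x, y) ∂ν) - 16 * mu / m * ∫ y, F2 (x, y) ∂ν) ν :=
      ((I1.integral_prod_left.const_mul _).neg).sub (I2.integral_prod_left.const_mul _)
    exact hInt2.congr h1.symm
  have hdisj : Disjoint Ω ΩI := Set.disjoint_left.mpr fun a haΩ haI => (hΩI_sub haI) haΩ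
  have hsplit : (∫ x, (⟪-(Lu x), z x⟫ : ℝ) ∂ν) =
      (∫ x in Ω, (⟪-(Lu x), z x⟫ : ℝ)) + ∫ x in ΩI, (⟪-(Lu x), z x⟫ : ℝ) :=
    setIntegral_union hdisj hΩI_meas (hIf.mono_set Set.subset_union_left)
      (hIf.mono_set Set.subset_union_right)
  have hzero : (∫ x in ΩI, (⟪-(Lu x), z x⟫ : ℝ)) = 0 := by
    apply integral_eq_zero_of_ae
    filter_upwards [hz0] with x hx
    simp [hx]
  have hΩeq : (∫ x in Ω, (⟪-(Lu x), z x⟫ : ℝ)) = ∫ x, (⟪-(Lu x), z x⟫ : ℝ) ∂ν := by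
    rw [hsplit, hzero, add_zero]
  rw [hΩeq]
  exact main1
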